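/- Let (N,m0,mf) be a net system, with N a labeled open Petri net. Suppose t is a transition and σ a finite sequence of transitions such that for every transition t' occurring in σ, the preset •t' is disjoint from •t ∪ t•. Then for every marking m reachable from m0 in which t is enabled and from which σ is executable, there is a marking m' such that for every interleaving σ' of ⟨t⟩ and σ, m →σ' m'. -/

import Mathlib

namespace PortNets

/-- Direction of communication of a transition: send, receive, or internal (τ). -/
inductive Dir : Type
  | send | receive | tau
deriving DecidableEq

/-- Preset of a node `x` with respect to a flow relation `F`. -/
def pre {Node : Type} (F : Set (Node × Node)) (x : Node) : Set Node := {y | (y, x) ∈ F}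

/-- Postset of a node `x` with respect to a flow relation `F`. -/
def post {Node : Type} (F : Set (Node × Node)) (x : Node) : Set Node := {y | (x, y) ∈ F}

/-- Raw data of an open Petri net (with labels): internal places `P`, input places `I`,
output places `O`, transitions `T`, flow `F`, initial and final places, labeling `μ`. -/
structure OPN (Node L : Type) where
  P : Set Node
  I : Set Node
  O : Set Node
  T : Set Node
  F : Set (Node × Node)
  init : Set Node
  fin : Set Node
  μ : Node → L

variable {Node L : Type}

/-- All places of an OPN. -/
def OPN.places (N : OPN Node L) : Set Node := N.P ∪ N.I ∪ N.O

/-- All nodes of an OPN. -/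
def OPN.nodes (N : OPN Node L) : Set Node := N.places ∪ N.T

/-- Structural requirements of an open Petri net. -/
structure IsOPN (N : OPN Node L) : Prop where
  disjPI : N.P ∩ N.I = ∅
  disjPO : N.P ∩ N.O = ∅
  disjIO : N.I ∩ N.O = ∅
  disjPT : N.places ∩ N.T = ∅
  flow_sub : N.F ⊆ (N.places ×ˢ N.T) ∪ (N.T ×ˢ N.places)
  no_pre_I : ∀ x ∈ N.I, pre N.F x = ∅
  no_post_O : ∀ x ∈ N.O, post N.F x = ∅
  not_both : ∀ t ∈ N.T, ¬((pre N.F t ∩ N.I).Nonempty ∧ (post N.F t ∩ N.O).Nonempty)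
  init_sub : N.init ⊆ N.P
  fin_sub : N.fin ⊆ N.P

open Classical in
noncomputable def dir (N : OPN Node L) (t : Node) : Dir :=
  if (post N.F t ∩ N.O).Nonempty then Dir.send
  else if (pre N.F t ∩ N.I).Nonempty then Dir.receive
  else Dir.tau

open Classical in
noncomputable def fireAt (F : Set (Node × Node)) (m : Node → ℕ) (t : Node) : Node → ℕ :=
  fun p => m p - (if (p, t) ∈ F then 1 else 0) + (if (t, p) ∈ F then 1 else 0)

/-- `Fires T F m t m'`: transition `t` is enabled in marking `m` and firing it yields `m'`. -/
def Fires (T : Set Node) (F : Set (Node × Node)) (m : Node → ℕ) (t : Node)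
    (m' : Node → ℕ) : Prop :=
  t ∈ T ∧ (∀ p, (p, t) ∈ F → 1 ≤ m p) ∧ m' = fireAt F m t

/-- Firing a finite sequence of transitions. -/
inductive FireSeq (T : Set Node) (F : Set (Node × Node)) :
    (Node → ℕ) → List Node → (Node → ℕ) → Prop
  | nil (m : Node → ℕ) : FireSeq T F m [] m
  | cons {m m' m'' : Node → ℕ} {t : Node} {σ : List Node} :
      Fires T F m t m' → FireSeq T F m' σ m'' → FireSeq T F m (t :: σ) m''

/-- Reachability of markings. -/
def Reach (T : Set Node) (F : Set (Node × Node)) (m m' : Node → ℕ) : Prop :=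
  ∃ σ : List Node, FireSeq T F m σ m'

/-- Weak termination: from every marking reachable from `m0`, the marking `mf` is reachable. -/
def WeaklyTerminates (T : Set Node) (F : Set (Node × Node)) (m0 mf : Node → ℕ) : Prop :=
  ∀ m, Reach T F m0 m → Reach T F m mf

/-- The marking putting one token on each element of a set of places. -/
noncomputable def mark (s : Set Node) : Node → ℕ := s.indicator fun _ => 1

/-- Flow relation of the skeleton: all arcs not adjacent to interface places. -/
def skF (N : OPN Node L) : Set (Node × Node) :=
  {x ∈ N.F | x.1 ∉ N.I ∪ N.O ∧ x.2 ∉ N.I ∪ N.O}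

/-- The skeleton is a state machine: each transition has at most one place in its
preset and at most one in its postset. -/
def IsSM (N : OPN Node L) : Prop :=
  ∀ t ∈ N.T, (pre (skF N) t).Subsingleton ∧ (post (skF N) t).Subsingleton

/-- `x` lies on a path from `i` to `f` w.r.t. flow `F`. -/
def OnPath (F : Set (Node × Node)) (i f x : Node) : Prop :=
  ∃ l : List Node, l ≠ [] ∧ List.Chain' (fun a b => (a, b) ∈ F) l ∧
    l.head? = some i ∧ l.getLast? = some f ∧ x ∈ l

/-- Workflow net (with places `P`, transitions `T`, flow `F`): `i` is the unique place with
empty preset, `f` the unique place with empty postset, and every node is on a path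
from `i` to `f`. -/
def IsWFNOn (P T : Set Node) (F : Set (Node × Node)) (i f : Node) : Prop :=
  i ∈ P ∧ f ∈ P ∧ pre F i = ∅ ∧ post F f = ∅ ∧
    (∀ p ∈ P, pre F p = ∅ → p = i) ∧
    (∀ p ∈ P, post F p = ∅ → p = f) ∧
    (∀ x ∈ P ∪ T, OnPath F i f x)

/-- Transition `t` is connected (by an arc, in either direction) to node `x`. -/
def connected (N : OPN Node L) (t x : Node) : Prop := (x, t) ∈ N.F ∨ (t, x) ∈ N.F

/-- A labeled portnet: an OPN whose skeleton is a state-machine workflow net, with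
singleton `init` and `fin`, every transition connected to exactly one interface place,
transitions sharing an interface place sharing a label, and transitions sharing a
label sharing their interface place connections. -/
structure IsPortnet (N : OPN Node L) : Prop where
  isOPN : IsOPN N
  isSM : IsSM N
  init_single : ∃ i, N.init = {i}
  fin_single : ∃ f, N.fin = {f}
  isWFN : ∀ i f, N.init = {i} → N.fin = {f} → IsWFNOn N.P N.T (skF N) i f
  one_iface : ∀ t ∈ N.T, ∃! x, x ∈ N.I ∪ N.O ∧ connected N t x
  same_iface_label : ∀ x ∈ N.I ∪ N.O, ∀ t t', t ∈ N.T → t' ∈ N.T →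
    connected N t x → connected N t' x → N.μ t = N.μ t'
  same_label_iface : ∀ t ∈ N.T, ∀ t' ∈ N.T, N.μ t = N.μ t' →
    ∀ x ∈ N.I ∪ N.O, (connected N t x ↔ connected N t' x)

/-- Observable choices: distinct transitions in the postset of a place have distinct labels. -/
def ObservableChoices (N : OPN Node L) : Prop :=
  ∀ p ∈ N.P, ∀ t ∈ post N.F p, ∀ t' ∈ post N.F p, t ≠ t' → N.μ t ≠ N.μ t'

/-- Choice property: all transitions in the postset of a place have the same direction. -/
def ChoiceProp (N : OPN Node L) : Prop :=
  ∀ p ∈ N.P, ∀ t ∈ post N.F p, ∀ t' ∈ post N.F p, dir N t = dir N t'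

/-- Diamond property. -/
def DiamondProp (N : OPN Node L) : Prop :=
  ∀ p ∈ N.P, ∀ t ∈ post N.F p, ∀ t' ∈ post N.F p, dir N t ≠ dir N t' →
    ∀ q ∈ post (skF N) t, ∀ q' ∈ post (skF N) t',
      ∃ u ∈ post (skF N) q, ∃ u' ∈ post (skF N) q',
        (post (skF N) u ∩ post (skF N) u').Nonempty ∧
        N.μ t = N.μ u' ∧ N.μ t' = N.μ u

/-- Loop property. -/
def LoopProp (N : OPN Node L) : Prop :=
  ∀ p ∈ N.P, ∀ t ∈ post N.F p, ∀ t' ∈ post N.F p, t ≠ t' → dir N t = dir N t' →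
    ∀ (l : List Node) (t'' : Node),
      List.Chain' (fun a b => (a, b) ∈ N.F) (p :: t :: (l ++ [t''])) →
      t'' ∈ N.T → N.μ t'' = N.μ t' →
      (∀ u ∈ l, u ∈ N.T → N.μ u ≠ N.μ t') →
      ∃ v ∈ t :: (l ++ [t'']), v ∈ N.T ∧ dir N v ≠ dir N t

/-- Well-formed labeled portnet. -/
def WellFormed (N : OPN Node L) : Prop :=
  IsPortnet N ∧ ObservableChoices N ∧ DiamondProp N ∧ LoopProp N

/-- `(M, φ)` is a partial mirror of the labeled portnet `N`. -/
structure IsPartialMirror (N M : OPN Node L) (φ : Node → Node) : Prop where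
  portN : IsPortnet N
  portM : IsPortnet M
  inj : Set.InjOn φ M.nodes
  mapsP : ∀ x ∈ M.P, φ x ∈ N.P
  mapsT : ∀ x ∈ M.T, φ x ∈ N.T
  mapsI : ∀ x ∈ M.I, φ x ∈ N.O
  mapsO : ∀ x ∈ M.O, φ x ∈ N.I
  flow_same : ∀ x y, (x, y) ∈ M.F → x ∉ M.I → y ∉ M.O → (φ x, φ y) ∈ N.F
  flow_rev : ∀ x y, (x, y) ∈ M.F → (x ∈ M.I ∨ y ∈ M.O) → (φ y, φ x) ∈ N.F
  init_eq : φ '' M.init = N.init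
  fin_eq : φ '' M.fin = N.fin
  lab : ∀ t ∈ M.T, M.μ t = N.μ (φ t)
  send_cover : ∀ p ∈ M.P, ∀ t, (φ p, t) ∈ N.F → dir N t = Dir.send →
    ∃ t', (p, t') ∈ M.F ∧ φ t' = t

/-- Composability of two OPNs. -/
def Composable (N M : OPN Node L) : Prop :=
  (N.nodes ∩ M.nodes = (N.I ∪ N.O) ∩ (M.I ∪ M.O)) ∧
  (((N.I ∩ M.O) ∪ (M.I ∩ N.O)).Nonempty →
    N.O ⊆ M.I ∧ M.O ⊆ N.I ∧ N.I ∩ M.I = ∅ ∧ N.O ∩ M.O = ∅)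

open Classical in
noncomputable def compose2 (N M : OPN Node L) : OPN Node L where
  P := N.P ∪ M.P ∪ ((N.I ∪ M.I) ∩ (N.O ∪ M.O))
  I := (N.I ∪ M.I) \ (N.O ∪ M.O)
  O := (N.O ∪ M.O) \ (N.I ∪ M.I)
  T := N.T ∪ M.T
  F := N.F ∪ M.F
  init := N.init ∪ M.init
  fin := N.fin ∪ M.fin
  μ := fun x => if x ∈ N.T then N.μ x else M.μ x

end PortNets

namespace PortNets

section ShuffleAux

variable {Node L : Type}

/-- Firing `t` does not touch a place outside its preset/postset. -/
lemma fireAt_eq_of_notmem {F : Set (Node × Node)} {m : Node → ℕ} {t p : Node}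
    (h1 : (p, t) ∉ F) (h2 : (t, p) ∉ F) : fireAt F m t p = m p := by
  classical
  unfold fireAt
  simp [h1, h2]

/-- Commutation of firings of `t` and a disjoint `t'`. -/
lemma fireAt_comm {F : Set (Node × Node)} {m : Node → ℕ} {t t' : Node}
    (hd : ∀ p, (p, t') ∈ F → ¬((p, t) ∈ F ∨ (t, p) ∈ F))
    (hen : ∀ p, (p, t) ∈ F → 1 ≤ m p) :
    fireAt F (fireAt F m t) t' = fireAt F (fireAt F m t') t := by
  classical
  funext p
  unfold fireAt
  by_cases hc : (p, t') ∈ F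
  · have := hd p hc
    have ha : (p, t) ∉ F := fun h => this (Or.inl h)
    have hb : (t, p) ∉ F := fun h => this (Or.inr h)
    simp [ha, hb, hc]
  · by_cases ha : (p, t) ∈ F
    · have hm := hen p ha
      simp only [if_pos ha, if_neg hc]
      split <;> split <;> omega
    · simp only [if_neg ha, if_neg hc]
      split <;> split <;> omega

theorem shuffle_aux_enabled {W : OPN Node L} {m m' : Node → ℕ} {t t' : Node}
    (hd : ∀ p, (p, t') ∈ W.F → ¬((p, t) ∈ W.F ∨ (t, p) ∈ W.F))
    (hf : Fires W.T W.F m t' m') (hen : ∀ p, (p, t) ∈ W.F → 1 ≤ m p) :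
    ∀ p, (p, t) ∈ W.F → 1 ≤ m' p := by
  classical
  intro p hp
  obtain ⟨_, _, rfl⟩ := hf
  unfold fireAt
  have h1 : (p, t') ∉ W.F := fun h => hd p h (Or.inl hp)
  have := hen p hp
  simp only [h1, if_neg, not_false_iff]
  split <;> omega

/-- Key lemma: firing `t` commutes with a whole disjoint sequence. -/
theorem fireSeq_comm {W : OPN Node L} {m m₂ : Node → ℕ} {σ : List Node}
    (hσ : FireSeq W.T W.F m σ m₂)
    (hdisj : ∀ t' ∈ σ, ∀ p, (p, t') ∈ W.F → ¬((p, t) ∈ W.F ∨ (t, p) ∈ W.F))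
    (ht : t ∈ W.T) (hen : ∀ p, (p, t) ∈ W.F → 1 ≤ m p) :
    (∀ p, (p, t) ∈ W.F → 1 ≤ m₂ p) ∧
      FireSeq W.T W.F (fireAt W.F m t) σ (fireAt W.F m₂ t) := by
  classical
  induction hσ with
  | nil m => exact ⟨hen, FireSeq.nil _⟩
  | @cons m m' m'' t'' σ' hf hs ih =>
    have hd'' : ∀ p, (p, t'') ∈ W.F → ¬((p, t) ∈ W.F ∨ (t, p) ∈ W.F) :=
      hdisj t'' List.mem_cons_self
    have hen' : ∀ p, (p, t) ∈ W.F → 1 ≤ m' p := shuffle_aux_enabled hd'' hf hen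
    obtain ⟨h1, h2⟩ := ih (fun u hu => hdisj u (List.mem_cons_of_mem _ hu)) hen'
    obtain ⟨ht'', hen'', rfl⟩ := hf
    have hcomm : fireAt W.F (fireAt W.F m t) t'' = fireAt W.F (fireAt W.F m t'') t :=
      fireAt_comm hd'' hen
    refine ⟨h1, FireSeq.cons ⟨ht'', ?_, hcomm.symm⟩ h2⟩
    intro p hp
    have hn := hd'' p hp
    have heq : fireAt W.F m t p = m p :=
      fireAt_eq_of_notmem (fun h => hn (Or.inl h)) (fun h => hn (Or.inr h))
    rw [heq]; exact hen'' p hp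

theorem fireSeq_append_split {T : Set Node} {F : Set (Node × Node)}
    {m m₂ : Node → ℕ} {α' α'' : List Node}
    (h : FireSeq T F m (α' ++ α'') m₂) :
    ∃ mi, FireSeq T F m α' mi ∧ FireSeq T F mi α'' m₂ := by
  induction α' generalizing m with
  | nil => exact ⟨m, FireSeq.nil _, h⟩
  | cons a l ih =>
    cases h with
    | cons hf hs =>
      obtain ⟨mi, h1, h2⟩ := ih hs
      exact ⟨mi, FireSeq.cons hf h1, h2⟩

theorem fireSeq_append {T : Set Node} {F : Set (Node × Node)}
    {m mi m₂ : Node → ℕ} {α' α'' : List Node}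
    (h1 : FireSeq T F m α' mi) (h2 : FireSeq T F mi α'' m₂) :
    FireSeq T F m (α' ++ α'') m₂ := by
  induction h1 with
  | nil => exact h2
  | cons hf _ ih => exact FireSeq.cons hf (ih h2)

end ShuffleAux

/-- shuffle lemma: if the preset of every transition in `σ` is disjoint from
`•t ∪ t•`, then from any reachable marking `m` in which `t` is enabled and from which `σ`
is executable, all interleavings of `⟨t⟩` and `σ` are executable and lead to the same
marking. -/
theorem shuffle {Node L : Type} (W : OPN Node L) (hW : IsOPN W)
    (m0 mf : Node → ℕ) (t : Node) (σ : List Node)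
    (hdisj : ∀ t' ∈ σ, ∀ p, p ∈ pre W.F t' → p ∉ pre W.F t ∪ post W.F t) :
    ∀ m, Reach W.T W.F m0 m →
      (∃ m₁, Fires W.T W.F m t m₁) → (∃ m₂, FireSeq W.T W.F m σ m₂) →
      ∃ m', ∀ α' α'', σ = α' ++ α'' → FireSeq W.T W.F m (α' ++ t :: α'') m' := by
  classical
  rintro m _ ⟨m₁, hf⟩ ⟨m₂, hσ⟩
  have hdisj' : ∀ t' ∈ σ, ∀ p, (p, t') ∈ W.F → ¬((p, t) ∈ W.F ∨ (t, p) ∈ W.F) := by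
    intro t' ht' p hp
    have := hdisj t' ht' p hp
    simpa [pre, post] using this
  obtain ⟨ht, hen, -⟩ := hf
  refine ⟨fireAt W.F m₂ t, ?_⟩
  rintro α' α'' rfl
  obtain ⟨mi, h1, h2⟩ := fireSeq_append_split hσ
  have hd1 : ∀ t' ∈ α', ∀ p, (p, t') ∈ W.F → ¬((p, t) ∈ W.F ∨ (t, p) ∈ W.F) :=
    fun t' ht' => hdisj' t' (List.mem_append_left _ ht')
  have hd2 : ∀ t' ∈ α'', ∀ p, (p, t') ∈ W.F → ¬((p, t) ∈ W.F ∨ (t, p) ∈ W.F) :=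
    fun t' ht' => hdisj' t' (List.mem_append_right _ ht')
  obtain ⟨hen_mi, -⟩ := fireSeq_comm h1 hd1 ht hen
  obtain ⟨-, h3⟩ := fireSeq_comm h2 hd2 ht hen_mi
  exact fireSeq_append h1 (FireSeq.cons ⟨ht, hen_mi, rfl⟩ h3)

end PortNets
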